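/- Let k ≥ 1 and m ≥ 2 be integers satisfying (2k−1)! · 2^m ≥ 2^{k(2k−1)}. Then there exist vectors u_1, …, u_k ∈ F_{2^m}² such that for all x_1, …, x_{2k−1} ∈ F_{2^m}, at least one u_i does not lie in the F_2-linear span of {(x_j, x_j³) : 1 ≤ j ≤ 2k−1} inside F_{2^m}². (Equivalently, ρ_k(BCH(2,m)) ≥ 2k whenever 2^m ≥ 2^{k(2k−1)}/(2k−1)!.) -/

import Mathlib

private lemma factorial_le_pow_pred : ∀ n : ℕ, Nat.factorial n ≤ n ^ (n - 1)
  | 0 => by simp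
  | 1 => by simp
  | (n+2) => by
      have ih := factorial_le_pow_pred (n+1)
      calc Nat.factorial (n+2) = (n+2) * Nat.factorial (n+1) := rfl
        _ ≤ (n+2) * (n+1) ^ n := Nat.mul_le_mul_left _ (by simpa using ih)
        _ ≤ (n+2) * (n+2) ^ n := Nat.mul_le_mul_left _ (Nat.pow_le_pow_left (by omega) n)
        _ = (n+2) ^ (n+1) := (pow_succ' _ _).symm

private lemma two_mul_sub_one_le_two_pow : ∀ k : ℕ, 2 * k - 1 ≤ 2 ^ k
  | 0 => by simp
  | (k+1) => by
      have ih := two_mul_sub_one_le_two_pow k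
      have h2 : k < 2 ^ k := Nat.lt_two_pow_self (n := k)
      have : 2 ^ (k+1) = 2 ^ k + 2 ^ k := by ring
      omega

/-- If `k ≥ 1`, `m ≥ 2` and `(2k−1)! · 2^m ≥ 2^{k(2k−1)}`, then there exist
`u₁, …, u_k ∈ F_{2^m}²` such that for all `x₁, …, x_{2k−1} ∈ F_{2^m}`, some `uᵢ` is not in the
`F_2`-span of `{(x_j, x_j³) : 1 ≤ j ≤ 2k−1}`. Equivalently,
`ρ_k(BCH(2,m)) ≥ 2k` whenever `2^m ≥ 2^{k(2k−1)}/(2k−1)!`. -/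
theorem rho_k_BCH_two_ge_two_k (k m : ℕ) (hk : 1 ≤ k) (hm : 2 ≤ m)
    (h : 2 ^ (k * (2 * k - 1)) ≤ Nat.factorial (2 * k - 1) * 2 ^ m) :
    ∃ u : Fin k → GaloisField 2 m × GaloisField 2 m,
      ∀ x : Fin (2 * k - 1) → GaloisField 2 m,
        ∃ i, u i ∉ Submodule.span (ZMod 2)
          (Set.range fun j => (x j, x j ^ 3)) := by
  classical
  set F := GaloisField 2 m with hF
  haveI : Fintype F := Fintype.ofFinite F
  set d := 2 * k - 1 with hd
  have hd1 : 1 ≤ d := by omega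
  set N := 2 ^ m with hNdef
  have hNcard : Fintype.card F = N := by
    have hm0 : m ≠ 0 := by omega
    rw [← Nat.card_eq_fintype_card]
    exact GaloisField.card 2 m hm0
  have hN4 : 4 ≤ N := by
    calc (4 : ℕ) = 2 ^ 2 := by norm_num
    _ ≤ 2 ^ m := Nat.pow_le_pow_right (by norm_num) hm
  -- `d ≤ N`
  have hd2k : d ≤ 2 ^ k := two_mul_sub_one_le_two_pow k
  have hddfact : d * Nat.factorial d ≤ 2 ^ (k * d) := by
    calc d * Nat.factorial d ≤ d * d ^ (d - 1) :=
          Nat.mul_le_mul_left _ (factorial_le_pow_pred d)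
      _ = d ^ d := by
          rw [← pow_succ']
          congr 1
          omega
      _ ≤ (2 ^ k) ^ d := Nat.pow_le_pow_left hd2k d
      _ = 2 ^ (k * d) := by rw [← pow_mul]
  have hdN : d ≤ N := by
    have h1 := hddfact.trans h
    rw [mul_comm (Nat.factorial d) N] at h1
    exact Nat.le_of_mul_le_mul_right h1 (Nat.factorial_pos d)
  -- the counting function
  set f : ({t : Finset F // t.card = d} × (Fin k → Fin d → ZMod 2)) → (Fin k → F × F) := fun p i =>
    ∑ j, p.2 i j • ((((p.1 : {t : Finset F // t.card = d}).1.equivFin.symm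
      (Fin.cast p.1.2.symm j) : (p.1).1) : F),
      (((p.1).1.equivFin.symm (Fin.cast p.1.2.symm j) : (p.1).1) : F) ^ 3) with hf
  have hcardD : Fintype.card ({t : Finset F // t.card = d} × (Fin k → Fin d → ZMod 2))
      = Nat.choose N d * 2 ^ (d * k) := by
    rw [Fintype.card_prod, Fintype.card_finset_len, hNcard, Fintype.card_fun,
      Fintype.card_fun, ZMod.card, Fintype.card_fin, Fintype.card_fin, ← pow_mul]
  have hcardC : Fintype.card (Fin k → F × F) = N ^ (2 * k) := by
    rw [Fintype.card_fun, Fintype.card_prod, hNcard, Fintype.card_fin, ← sq, ← pow_mul]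
  have hlt : Fintype.card ({t : Finset F // t.card = d} × (Fin k → Fin d → ZMod 2))
      < Fintype.card (Fin k → F × F) := by
    rw [hcardD, hcardC]
    rcases eq_or_lt_of_le hk with h1 | h2
    · -- k = 1
      have hk1 : k = 1 := h1.symm
      subst hk1
      simp only [hd] at *
      norm_num [Nat.choose_one_right]
      calc N * 2 ^ (1 * 1) = N * 2 := by norm_num
        _ < N * N := Nat.mul_lt_mul_of_le_of_lt (le_refl N) (by omega) (by omega)
        _ = N ^ (2 * 1) := by ring
    · -- k ≥ 2
      have hd3 : 2 ≤ d := by omega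
      calc Nat.choose N d * 2 ^ (d * k)
          ≤ Nat.choose N d * (Nat.factorial d * N) := by
            apply Nat.mul_le_mul_left
            rw [mul_comm d k]; exact h
        _ = (Nat.factorial d * Nat.choose N d) * N := by ring
        _ = N.descFactorial d * N := by rw [← Nat.descFactorial_eq_factorial_mul_choose]
        _ < N ^ d * N := by
            apply Nat.mul_lt_mul_of_lt_of_le (Nat.descFactorial_lt_pow (by omega) hd3)
              (le_refl N) (by omega)
        _ = N ^ (2 * k) := by
            rw [← pow_succ]
            congr 1
            omega
  have hnotsurj : ¬ Function.Surjective f := fun hs =>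
    absurd (Fintype.card_le_of_surjective f hs) (not_le.mpr hlt)
  simp only [Function.Surjective, not_forall, not_exists] at hnotsurj
  obtain ⟨u, hu⟩ := hnotsurj
  refine ⟨u, fun x => ?_⟩
  by_contra hcon
  push_neg at hcon
  -- build a preimage of `u` under `f`
  set s : Finset F := Finset.image x Finset.univ with hs
  have hscard : s.card ≤ d := by
    refine le_trans (Finset.card_image_le) ?_
    simp
  obtain ⟨t, hst, htc⟩ := Finset.exists_superset_card_eq hscard (by rw [hNcard]; exact hdN)
  set y : Fin d → F := fun j => ((t.equivFin.symm (Fin.cast htc.symm j) : t) : F) with hy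
  have hspan : ∀ i, u i ∈ Submodule.span (ZMod 2) (Set.range fun j => (y j, y j ^ 3)) := by
    intro i
    refine Submodule.span_mono ?_ (hcon i)
    rintro _ ⟨j, rfl⟩
    have hxj : x j ∈ t := hst (Finset.mem_image_of_mem x (Finset.mem_univ j))
    refine ⟨Fin.cast htc (t.equivFin ⟨x j, hxj⟩), ?_⟩
    simp [hy]
  have hc := fun i => (Submodule.mem_span_range_iff_exists_fun (ZMod 2)).mp (hspan i)
  choose c hcEq using hc
  exact hu ⟨⟨t, htc⟩, c⟩ (funext fun i => hcEq i)
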